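/- Let F_q have q = p^s elements with p prime and let ℓ ≥ 0 be an integer. Then x^{p^{ℓ+s}} - x^{p^ℓ} - 1 = ∏_j (x^p - x - β_j)^{p^ℓ} in F_q[x], where the product runs over the p^{s-1} distinct elements β_j of F_q with Tr_{F_q/F_p}(β_j) = 1, and each factor x^p - x - β_j is irreducible over F_q. -/

import Mathlib

open Polynomial

section Aux

variable {F : Type*} [Field F] (p s : ℕ) [hp : Fact p.Prime]

/-- coefficient of the "trace polynomial minus constant" at its top degree is 1 -/
private lemma aux_coeff (hs : 0 < s) (c : F) :
    ((∑ i ∈ Finset.range s, (X : F[X]) ^ p ^ i) - C c).coeff (p ^ (s - 1)) = 1 := by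
  have hpos : 0 < p ^ (s - 1) := pow_pos hp.out.pos _
  rw [Polynomial.coeff_sub, Polynomial.coeff_C, if_neg hpos.ne', sub_zero,
    Polynomial.finset_sum_coeff]
  rw [Finset.sum_eq_single (s - 1)]
  · simp [coeff_X_pow]
  · intro i _ hne
    rw [coeff_X_pow, if_neg]
    exact fun h => hne (Nat.pow_right_injective hp.out.two_le h.symm)
  · intro h
    exact absurd (Finset.mem_range.2 (Nat.sub_lt hs one_pos)) h

private lemma aux_deg (c : F) :
    ((∑ i ∈ Finset.range s, (X : F[X]) ^ p ^ i) - C c).degree ≤ (p ^ (s - 1) : ℕ) := by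
  apply (degree_sub_le _ _).trans
  apply max_le
  · apply (Polynomial.degree_sum_le _ _).trans
    apply Finset.sup_le
    intro i hi
    have hi' := Finset.mem_range.1 hi
    rw [degree_X_pow]
    exact_mod_cast Nat.pow_le_pow_right hp.out.pos (by omega : i ≤ s - 1)
  · exact degree_C_le.trans (by exact_mod_cast Nat.cast_nonneg _)

private lemma aux_monic (hs : 0 < s) (c : F) :
    ((∑ i ∈ Finset.range s, (X : F[X]) ^ p ^ i) - C c).Monic ∧
    ((∑ i ∈ Finset.range s, (X : F[X]) ^ p ^ i) - C c).natDegree = p ^ (s - 1) := by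
  have h1 := aux_coeff p s hs c
  have h2 := aux_deg p s c
  have hnd : ((∑ i ∈ Finset.range s, (X : F[X]) ^ p ^ i) - C c).natDegree = p ^ (s - 1) :=
    le_antisymm (natDegree_le_iff_degree_le.2 h2)
      (le_natDegree_of_ne_zero (by rw [h1]; exact one_ne_zero))
  exact ⟨by rw [Monic, Polynomial.leadingCoeff, hnd, h1], hnd⟩

variable [Fintype F] [DecidableEq F]

private lemma fiber_le_roots (hs : 0 < s) (c : F) :
    (Finset.univ.filter (fun β : F => (∑ i ∈ Finset.range s, β ^ (p ^ i)) = c)).val ≤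
      ((∑ i ∈ Finset.range s, (X : F[X]) ^ p ^ i) - C c).roots := by
  obtain ⟨hm, _⟩ := aux_monic p s hs c
  rw [Multiset.le_iff_subset (Finset.nodup _)]
  intro β hβ
  rw [Finset.mem_val, Finset.mem_filter] at hβ
  rw [mem_roots hm.ne_zero]
  simpa [Polynomial.IsRoot, Polynomial.eval_finset_sum, sub_eq_zero] using hβ.2

private lemma fiber_le (hs : 0 < s) (c : F) :
    (Finset.univ.filter (fun β : F => (∑ i ∈ Finset.range s, β ^ (p ^ i)) = c)).card ≤
      p ^ (s - 1) := by
  obtain ⟨_, hd⟩ := aux_monic p s hs c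
  have h := Multiset.card_le_card (fiber_le_roots p s hs c)
  rw [Finset.card]
  exact h.trans ((Polynomial.card_roots' _).trans_eq hd)

variable [CharP F p]

/-- Frobenius fixes the trace sum. -/
private lemma T_fix (hcard : Fintype.card F = p ^ s) (β : F) :
    (∑ i ∈ Finset.range s, β ^ (p ^ i)) ^ p = ∑ i ∈ Finset.range s, β ^ (p ^ i) := by
  have hfr := map_sum (frobenius F p) (fun i => β ^ (p ^ i)) (Finset.range s)
  simp only [frobenius_def] at hfr
  rw [hfr]
  have heq : ∀ i, (β ^ p ^ i) ^ p = β ^ p ^ (i + 1) := fun i => by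
    rw [← pow_mul, ← pow_succ]
  simp_rw [heq]
  have h1 := Finset.sum_range_succ' (fun i => β ^ p ^ i) s
  have h2 := Finset.sum_range_succ (fun i => β ^ p ^ i) s
  have h3 : β ^ p ^ s = β := by rw [← hcard]; exact FiniteField.pow_card β
  have h4 : β ^ p ^ 0 = β := by simp
  rw [h3] at h2
  rw [h4] at h1
  exact add_right_cancel (h1.symm.trans h2)

/-- trace of `a^p - a` vanishes. -/
private lemma T_AS_zero (hcard : Fintype.card F = p ^ s) (a : F) :
    ∑ i ∈ Finset.range s, (a ^ p - a) ^ (p ^ i) = 0 := by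
  have heq : ∀ i, (a ^ p - a) ^ p ^ i = a ^ p ^ (i + 1) - a ^ p ^ i := fun i => by
    rw [sub_pow_char_pow, ← pow_mul, ← pow_succ']
  simp_rw [heq]
  rw [Finset.sum_range_sub (fun i => a ^ p ^ i) s]
  have h3 : a ^ p ^ s = a := by rw [← hcard]; exact FiniteField.pow_card a
  rw [h3, pow_zero, pow_one, sub_self]

private lemma part1 (hcard : Fintype.card F = p ^ s) :
    (Finset.univ.filter
        (fun β : F => (∑ i ∈ Finset.range s, β ^ (p ^ i)) = 1)).card = p ^ (s - 1) := by
  have hs : 0 < s := by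
    rcases Nat.eq_zero_or_pos s with h | h
    · exfalso; subst h; simp at hcard
      have := Fintype.one_lt_card (α := F); omega
    · exact h
  classical
  set T : F → F := fun β => ∑ i ∈ Finset.range s, β ^ (p ^ i) with hT
  set I : Finset F := Finset.image T Finset.univ with hI
  -- the fixed-point polynomial
  set R : Finset F := ((X : F[X]) ^ p - X).roots.toFinset with hR
  have hXmon : ((X : F[X]) ^ p - X).Monic :=
    monic_X_pow_sub (by simpa using (by exact_mod_cast hp.out.one_lt : (1 : WithBot ℕ) < p))
  have hXdeg : ((X : F[X]) ^ p - X).natDegree = p := by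
    have h1 : ((X : F[X]) ^ p - X).degree = ((p : ℕ) : WithBot ℕ) := by
      have hlt : (X : F[X]).degree < ((X : F[X]) ^ p).degree := by
        rw [degree_X_pow, degree_X]; exact_mod_cast hp.out.one_lt
      rw [degree_sub_eq_left_of_degree_lt hlt, degree_X_pow]
    exact natDegree_eq_of_degree_eq_some h1
  have hRcard : R.card ≤ p := by
    refine (Multiset.toFinset_card_le _).trans ?_
    exact (Polynomial.card_roots' _).trans_eq hXdeg
  have hsubIR : I ⊆ R := by
    intro y hy
    obtain ⟨β, -, rfl⟩ := Finset.mem_image.1 hy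
    rw [hR, Multiset.mem_toFinset, mem_roots hXmon.ne_zero]
    rw [Polynomial.IsRoot, Polynomial.eval_sub, Polynomial.eval_pow, Polynomial.eval_X,
      T_fix p s hcard β, sub_self]
  have hIcardle : I.card ≤ p := (Finset.card_le_card hsubIR).trans hRcard
  have hcardsum : Fintype.card F
      = ∑ c ∈ I, (Finset.univ.filter (fun β => T β = c)).card := by
    rw [← Finset.card_univ]
    exact Finset.card_eq_sum_card_fiberwise
      (fun β _ => Finset.mem_image_of_mem T (Finset.mem_univ β))
  have hfib : ∀ c : F, (Finset.univ.filter (fun β => T β = c)).card ≤ p ^ (s - 1) :=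
    fun c => fiber_le p s hs c
  have hql : p ^ s ≤ I.card * p ^ (s - 1) := by
    calc p ^ s = Fintype.card F := hcard.symm
    _ = ∑ c ∈ I, (Finset.univ.filter (fun β => T β = c)).card := hcardsum
    _ ≤ I.card • p ^ (s - 1) := Finset.sum_le_card_nsmul I _ _ (fun c _ => hfib c)
    _ = I.card * p ^ (s - 1) := by rw [smul_eq_mul]
  have hps : p ^ s = p * p ^ (s - 1) := by
    conv_lhs => rw [show s = (s - 1) + 1 by omega]
    ring
  have hIcard : I.card = p := by
    by_contra hne
    have hlt : I.card < p := lt_of_le_of_ne hIcardle hne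
    have : I.card * p ^ (s - 1) < p * p ^ (s - 1) :=
      (Nat.mul_lt_mul_right (pow_pos hp.out.pos _)).2 hlt
    omega
  have hIR : I = R := Finset.eq_of_subset_of_card_le hsubIR (by rw [hIcard]; exact hRcard)
  have h1I : (1 : F) ∈ I := by
    rw [hIR, hR, Multiset.mem_toFinset, mem_roots hXmon.ne_zero]
    simp [Polynomial.IsRoot]
  have hsums : ∑ c ∈ I, (Finset.univ.filter (fun β => T β = c)).card
      = ∑ c ∈ I, p ^ (s - 1) := by
    rw [Finset.sum_const, smul_eq_mul, hIcard, ← hcardsum, hcard]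
    exact hps
  exact (Finset.sum_eq_sum_iff_of_le (fun c _ => hfib c)).1 hsums 1 h1I

private lemma part2aux (hcard : Fintype.card F = p ^ s) :
    (X ^ (p ^ s) - X - 1 : F[X]) =
      ∏ β ∈ Finset.univ.filter
          (fun β : F => (∑ i ∈ Finset.range s, β ^ (p ^ i)) = 1),
        (X ^ p - X - C β) := by
  have hs : 0 < s := by
    rcases Nat.eq_zero_or_pos s with h | h
    · exfalso; subst h; simp at hcard
      have := Fintype.one_lt_card (α := F); omega
    · exact h
  set S1 := Finset.univ.filter
      (fun β : F => (∑ i ∈ Finset.range s, β ^ (p ^ i)) = 1) with hS1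
  obtain ⟨hm, hd⟩ := aux_monic p s hs (1 : F)
  have hval : S1.val ≤ ((∑ i ∈ Finset.range s, (X : F[X]) ^ p ^ i) - C 1).roots :=
    fiber_le_roots p s hs 1
  have hS1card : S1.card = p ^ (s - 1) := part1 p s hcard
  have hcards : Multiset.card ((∑ i ∈ Finset.range s, (X : F[X]) ^ p ^ i) - C 1).roots
      = p ^ (s - 1) := by
    refine le_antisymm ((Polynomial.card_roots' _).trans_eq hd) ?_
    have := Multiset.card_le_card hval
    rwa [← Finset.card, hS1card] at this
  have hroots : ((∑ i ∈ Finset.range s, (X : F[X]) ^ p ^ i) - C 1).roots = S1.val :=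
    (Multiset.eq_of_le_of_card_le hval (by rw [hcards, ← hS1card]; rfl)).symm
  have hsplits : ((∑ i ∈ Finset.range s, (X : F[X]) ^ p ^ i) - C 1).Splits :=
    (splits_iff_card_roots).2 (hcards.trans hd.symm)
  have hprod : (∑ i ∈ Finset.range s, (X : F[X]) ^ p ^ i) - C 1 = ∏ β ∈ S1, (X - C β) := by
    rw [hsplits.eq_prod_roots_of_monic hm, hroots]
    rfl
  -- compose with X^p - X
  set q : F[X] := X ^ p - X with hq
  set φ : F[X] →+* F[X] := eval₂RingHom (C : F →+* F[X]) q with hφ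
  have hL : φ ((∑ i ∈ Finset.range s, (X : F[X]) ^ p ^ i) - C 1)
      = X ^ (p ^ s) - X - 1 := by
    rw [map_sub, map_sum]
    have hφX : φ X = q := by simp [hφ]
    have hterm : ∀ i, φ ((X : F[X]) ^ p ^ i) = X ^ p ^ (i + 1) - X ^ p ^ i := by
      intro i
      rw [map_pow, hφX, hq, sub_pow_char_pow, ← pow_mul, ← pow_succ']
    simp_rw [hterm]
    rw [Finset.sum_range_sub (fun i => (X : F[X]) ^ p ^ i) s]
    simp [hφ]
  have hRst : φ ((∑ i ∈ Finset.range s, (X : F[X]) ^ p ^ i) - C 1)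
      = ∏ β ∈ S1, (X ^ p - X - C β) := by
    rw [hprod, map_prod]
    apply Finset.prod_congr rfl
    intro β _
    rw [map_sub]
    simp [hφ, hq, sub_sub]
  rw [← hL, hRst]

private lemma part3 (hcard : Fintype.card F = p ^ s) (β : F)
    (hβ : (∑ i ∈ Finset.range s, β ^ (p ^ i)) = 1) :
    Irreducible (X ^ p - X - C β : F[X]) := by
  have hp1 : 1 < p := hp.out.one_lt
  set f : F[X] := X ^ p - X - C β with hf
  have hf' : f = X ^ p - (X + C β) := by rw [hf]; ring
  have hdXC : ((X : F[X]) + C β).degree = 1 := degree_X_add_C β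
  have hmf : f.Monic := by
    rw [hf']
    exact monic_X_pow_sub (by rw [hdXC]; exact_mod_cast hp1)
  have hdf : f.natDegree = p := by
    have h1 : f.degree = ((p : ℕ) : WithBot ℕ) := by
      have hlt : ((X : F[X]) + C β).degree < ((X : F[X]) ^ p).degree := by
        rw [hdXC, degree_X_pow]; exact_mod_cast hp1
      rw [hf', degree_sub_eq_left_of_degree_lt hlt, degree_X_pow]
    exact natDegree_eq_of_degree_eq_some h1
  have hfne : f ≠ 0 := hmf.ne_zero
  set K := AlgebraicClosure F with hK
  haveI : CharP K p := charP_of_injective_algebraMap (algebraMap F K).injective p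
  set fK : K[X] := f.map (algebraMap F K) with hfK
  have hmfK : fK.Monic := hmf.map _
  have hfKne : fK ≠ 0 := hmfK.ne_zero
  have hdfK : fK.natDegree = p := by rw [hfK, natDegree_map, hdf]
  have hfKform : fK = X ^ p - X - C (algebraMap F K β) := by
    rw [hfK, hf]
    simp [Polynomial.map_sub, Polynomial.map_pow]
  obtain ⟨α, hα⟩ : ∃ α : K, fK.IsRoot α := by
    apply IsAlgClosed.exists_root
    rw [degree_eq_natDegree hfKne, hdfK]
    exact_mod_cast hp.out.pos.ne'
  have hαval : α ^ p - α - algebraMap F K β = 0 := by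
    have := hα
    rwa [Polynomial.IsRoot, hfKform, Polynomial.eval_sub, Polynomial.eval_sub,
      Polynomial.eval_pow, Polynomial.eval_X, Polynomial.eval_C] at this
  set φ : ZMod p →+* K := ZMod.castHom dvd_rfl K with hφz
  set M : Multiset K := Multiset.map (fun c => α + φ c) Finset.univ.val with hM
  have hMnodup : M.Nodup := by
    refine Multiset.Nodup.map ?_ Finset.univ.nodup
    intro a b hab
    exact φ.injective (by simpa using hab)
  have hMcard : Multiset.card M = p := by
    rw [hM, Multiset.card_map, ← Finset.card, Finset.card_univ, ZMod.card]
  have hMroots : M ≤ fK.roots := by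
    rw [Multiset.le_iff_subset hMnodup]
    intro x hx
    obtain ⟨c, -, rfl⟩ := Multiset.mem_map.1 hx
    rw [mem_roots hfKne]
    rw [Polynomial.IsRoot, hfKform, Polynomial.eval_sub, Polynomial.eval_sub,
      Polynomial.eval_pow, Polynomial.eval_X, Polynomial.eval_C]
    have h1 : (α + φ c) ^ p = α ^ p + φ c ^ p := add_pow_char _ _ _
    have h2 : φ c ^ p = φ c := by rw [← map_pow, ZMod.pow_card]
    rw [h1, h2]
    linear_combination hαval
  have hrootsM : fK.roots = M :=
    (Multiset.eq_of_le_of_card_le hMroots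
      (by rw [hMcard]; exact (Polynomial.card_roots' _).trans_eq hdfK)).symm
  obtain ⟨G, hGm, hGirr, hGdvd⟩ := f.exists_monic_irreducible_factor
    (Polynomial.not_isUnit_of_natDegree_pos f (by omega))
  have hGd_le : G.natDegree ≤ p := hdf ▸ Polynomial.natDegree_le_of_dvd hGdvd hfne
  have hGd_pos : 0 < G.natDegree := hGirr.natDegree_pos
  rcases eq_or_lt_of_le hGd_le with heq | hlt
  · -- G has degree p, so f = G is irreducible
    obtain ⟨v, hv⟩ := hGdvd
    have hvne : v ≠ 0 := by
      rintro rfl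
      rw [mul_zero] at hv
      exact hfne hv
    have hvd : v.natDegree = 0 := by
      have := hv ▸ hdf
      rw [natDegree_mul hGm.ne_zero hvne] at this
      omega
    have hlc : v.leadingCoeff = 1 := by
      have h1 : f.leadingCoeff = G.leadingCoeff * v.leadingCoeff := by
        rw [hv, leadingCoeff_mul]
      rw [hmf.leadingCoeff, hGm.leadingCoeff, one_mul] at h1
      exact h1.symm
    have hv1 : v = 1 := by
      rw [Polynomial.eq_C_of_natDegree_eq_zero hvd]
      rw [Polynomial.eq_C_of_natDegree_eq_zero hvd] at hlc
      rw [leadingCoeff_C] at hlc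
      rw [hlc, map_one]
    rw [hv, hv1, mul_one]
    exact hGirr
  · -- degree < p : contradiction
    exfalso
    set GK : K[X] := G.map (algebraMap F K) with hGK
    have hGKm : GK.Monic := hGm.map _
    have hGKd : GK.natDegree = G.natDegree := natDegree_map _
    have hGKdvd : GK ∣ fK := Polynomial.map_dvd _ hGdvd
    have hGKsplits : GK.Splits := IsAlgClosed.splits GK
    have hGrc : Multiset.card GK.roots = G.natDegree := by
      rw [splits_iff_card_roots.1 hGKsplits, hGKd]
    have hGroots_le : GK.roots ≤ M := hrootsM ▸ roots.le_of_dvd hfKne hGKdvd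
    -- each root is α + (something in the image of F)
    set S : Subring K := (algebraMap F K).range with hS
    have hdiff : ∀ x ∈ GK.roots, x - α ∈ S := by
      intro x hx
      have hxM : x ∈ M := Multiset.mem_of_le hGroots_le hx
      obtain ⟨c, -, rfl⟩ := Multiset.mem_map.1 hxM
      rw [add_sub_cancel_left]
      have : φ = (algebraMap F K).comp (ZMod.castHom dvd_rfl F) := RingHom.ext_zmod _ _
      rw [this]
      exact ⟨ZMod.castHom dvd_rfl F c, rfl⟩
    -- sum of (x - α) over roots
    have hmapmem : (GK.roots.map (fun x => x - α)).sum ∈ S := by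
      refine multiset_sum_mem _ ?_
      intro y hy
      obtain ⟨x, hx, rfl⟩ := Multiset.mem_map.1 hy
      exact hdiff x hx
    have hsum_split : (GK.roots.map (fun x => x - α)).sum
        = GK.roots.sum - (Multiset.card GK.roots) • α := by
      induction GK.roots using Multiset.induction with
      | empty => simp
      | cons a t ih =>
        simp only [Multiset.map_cons, Multiset.sum_cons, Multiset.card_cons, ih,
          add_smul, one_smul]
        abel
    have hnext : GK.roots.sum = -algebraMap F K G.nextCoeff := by
      have h1 := hGKsplits.nextCoeff_eq_neg_sum_roots_of_monic hGKm
      have h2 : GK.nextCoeff = algebraMap F K G.nextCoeff :=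
        nextCoeff_map (algebraMap F K).injective G
      rw [h2] at h1
      linear_combination h1
    have hsmul_mem : (G.natDegree : K) * α ∈ S := by
      have h1 : GK.roots.sum - (Multiset.card GK.roots) • α ∈ S := by
        rw [← hsum_split]; exact hmapmem
      have h2 : GK.roots.sum ∈ S := by
        rw [hnext]; exact ⟨-G.nextCoeff, by simp⟩
      have h3 := Subring.sub_mem S h2 h1
      rw [sub_sub_cancel, hGrc, nsmul_eq_mul] at h3
      exact h3
    have hdF : ((G.natDegree : F)) ≠ 0 := by
      rw [Ne, CharP.cast_eq_zero_iff F p]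
      intro hdvd
      have := Nat.le_of_dvd hGd_pos hdvd
      omega
    obtain ⟨a, ha⟩ := hsmul_mem
    have hcast : algebraMap F K ((G.natDegree : F)) = (G.natDegree : K) := map_natCast _ _
    have hdK : ((G.natDegree : K)) ≠ 0 := by
      rw [← hcast]
      exact fun h => hdF ((algebraMap F K).injective (by rw [h, map_zero]))
    have hαF : α = algebraMap F K ((G.natDegree : F)⁻¹ * a) := by
      rw [map_mul, map_inv₀, hcast, ha, ← mul_assoc, inv_mul_cancel₀ hdK, one_mul]
    set b : F := (G.natDegree : F)⁻¹ * a with hb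
    have hroot : f.eval b = 0 := by
      apply (algebraMap F K).injective
      rw [map_zero, ← Polynomial.eval₂_at_apply (algebraMap F K) b]
      rw [← Polynomial.eval_map, ← hfK, ← hαF]
      exact hα
    have hβval : β = b ^ p - b := by
      rw [hf] at hroot
      simp only [Polynomial.eval_sub, Polynomial.eval_pow, Polynomial.eval_X,
        Polynomial.eval_C] at hroot
      linear_combination -hroot
    have h0 := T_AS_zero p s hcard b
    rw [← hβval] at h0
    rw [hβ] at h0
    exact one_ne_zero h0

end Aux

/-- `Tr_{F_q/F_p}(β) = ∑_{i<s} β^(p^i)`. -/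
theorem stmt17 {F : Type*} [Field F] [Fintype F] [DecidableEq F]
    (p s : ℕ) [Fact p.Prime] [CharP F p] (hcard : Fintype.card F = p ^ s) (ℓ : ℕ) :
    (Finset.univ.filter
        (fun β : F => (∑ i ∈ Finset.range s, β ^ (p ^ i)) = 1)).card = p ^ (s - 1) ∧
    (X ^ (p ^ (ℓ + s)) - X ^ (p ^ ℓ) - 1 : Polynomial F) =
      ∏ β ∈ Finset.univ.filter
          (fun β : F => (∑ i ∈ Finset.range s, β ^ (p ^ i)) = 1),
        (X ^ p - X - C β) ^ (p ^ ℓ) ∧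
    ∀ β ∈ Finset.univ.filter
        (fun β : F => (∑ i ∈ Finset.range s, β ^ (p ^ i)) = 1),
      Irreducible (X ^ p - X - C β : Polynomial F) := by
  refine ⟨part1 p s hcard, ?_, ?_⟩
  · have h0 := part2aux p s hcard
    have hpow : ((X : F[X]) ^ (p ^ s) - X - 1) ^ (p ^ ℓ)
        = X ^ (p ^ (ℓ + s)) - X ^ (p ^ ℓ) - 1 := by
      rw [sub_pow_char_pow, sub_pow_char_pow, one_pow, ← pow_mul, ← pow_add, Nat.add_comm s ℓ]
    rw [← hpow, h0]
    exact (Finset.prod_pow _ _ _).symm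
  · intro β hβm
    rw [Finset.mem_filter] at hβm
    exact part3 p s hcard β hβm.2
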